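/- arXiv:2303.17122 — 2 statements merged into one kernel-verified Lean document; each statement's English description precedes it below -/
import Mathlib

section
/- Let V be a real inner product space and J : V → V a linear map satisfying J² = −id and ⟨Ju, Jv⟩ = ⟨u, v⟩ for all u, v ∈ V. Define ω(u, v) = ⟨Ju, v⟩. Let W ⊆ V be a finite-dimensional subspace of dimension 2m. Then there exist an orthonormal basis e₁, …, e_{2m} of W and real numbers λ₁, …, λ_m with |λ_k| ≤ 1 for every k, such that ω(e_{2k−1}, e_{2k}) = λ_k for every k = 1, …, m, and ω(e_i, e_j) = 0 for every other pair i < j. -/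
open Module Submodule

set_option maxHeartbeats 3200000 in
private lemma aux_normal_form
    {V : Type*} [NormedAddCommGroup V] [InnerProductSpace ℝ V]
    (J : V →ₗ[ℝ] V)
    (hJ2 : ∀ v : V, J (J v) = -v)
    (hJc : ∀ u v : V, (inner ℝ (J u) (J v) : ℝ) = inner ℝ u v) :
    ∀ (m : ℕ) (W : Submodule ℝ V) [FiniteDimensional ℝ W],
      Module.finrank ℝ W = 2 * m →
      ∃ b : OrthonormalBasis (Fin (2 * m)) ℝ W,
        ∀ i j : Fin (2 * m), i < j →
          (¬ ∃ k : Fin m, (i : ℕ) = 2 * (k : ℕ) ∧ (j : ℕ) = 2 * (k : ℕ) + 1) →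
          (inner ℝ (J ((b i : W) : V)) ((b j : W) : V) : ℝ) = 0 := by
  have skewV : ∀ a b : V, (inner ℝ (J a) b : ℝ) = -inner ℝ a (J b) := by
    intro a b
    have h := hJc a (J b)
    rw [hJ2 b, inner_neg_right] at h
    linarith
  intro m
  induction m with
  | zero =>
      intro W _ hW
      exact ⟨(stdOrthonormalBasis ℝ W).reindex (finCongr hW), fun i => i.elim0⟩
  | succ m ih =>
      intro W instW hW
      -- the compression of J to W
      set T : W →ₗ[ℝ] W :=
        (orthogonalProjection W).toLinearMap ∘ₗ (J ∘ₗ W.subtype) with hTdef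
      have hT : ∀ x y : W, (inner ℝ (T x) y : ℝ) = inner ℝ (J (x : V)) (y : V) := fun x y =>
        inner_orthogonalProjection_eq_of_mem_right (K := W) y (J (x : V))
      have hT' : ∀ x y : W, (inner ℝ x (T y) : ℝ) = inner ℝ (x : V) (J (y : V)) := fun x y =>
        inner_orthogonalProjection_eq_of_mem_left (K := W) x (J (y : V))
      have hTskew : ∀ x y : W, (inner ℝ (T x) y : ℝ) = -inner ℝ x (T y) := by
        intro x y
        rw [hT, hT', skewV]
      by_cases hT0 : T = 0
      · refine ⟨(stdOrthonormalBasis ℝ W).reindex (finCongr hW), fun i j _ _ => ?_⟩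
        rw [← hT]
        simp [hT0]
      · -- S = -T², a symmetric PSD operator
        set S : W →ₗ[ℝ] W := -(T ∘ₗ T) with hSdef
        have hSapp : ∀ x : W, S x = -(T (T x)) := fun x => rfl
        have hSinner : ∀ x y : W, (inner ℝ (S x) y : ℝ) = inner ℝ (T x) (T y) := by
          intro x y
          rw [hSapp, inner_neg_left, hTskew, neg_neg]
        have hS : S.IsSymmetric := by
          intro x y
          rw [hSinner, real_inner_comm, ← hSinner, real_inner_comm]
        let eb := hS.eigenvectorBasis hW
        let c := hS.eigenvalues hW
        have hceq : ∀ i, (inner ℝ (T (eb i)) (T (eb i)) : ℝ) = c i := by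
          intro i
          rw [← hSinner]
          have h1 : S (eb i) = (c i : ℝ) • eb i := hS.apply_eigenvectorBasis hW i
          rw [h1, real_inner_smul_left, real_inner_self_eq_norm_sq,
            eb.orthonormal.1 i]
          simp
        have hex : ∃ i, c i ≠ 0 := by
          by_contra h
          push_neg at h
          apply hT0
          apply eb.toBasis.ext
          intro i
          rw [OrthonormalBasis.coe_toBasis]
          have h2 : (inner ℝ (T (eb i)) (T (eb i)) : ℝ) = 0 := by rw [hceq, h]
          simpa [inner_self_eq_zero] using h2
        obtain ⟨i0, hi0⟩ := hex
        set u : W := eb i0 with hu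
        have hcpos : 0 < c i0 := by
          rcases lt_or_eq_of_le (real_inner_self_nonneg (x := T u)) with h | h
          · rwa [hceq] at h
          · exact absurd ((hceq i0).symm.trans h.symm) hi0
        set μ : ℝ := Real.sqrt (c i0) with hμ
        have hμpos : 0 < μ := Real.sqrt_pos.mpr hcpos
        have hμsq : μ * μ = c i0 := Real.mul_self_sqrt hcpos.le
        set v : W := μ⁻¹ • T u with hv
        have hTu : T u = μ • v := by
          rw [hv, smul_smul, mul_inv_cancel₀ hμpos.ne', one_smul]
        have hunorm : ‖u‖ = 1 := eb.orthonormal.1 i0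
        have hvinner : (inner ℝ v v : ℝ) = 1 := by
          rw [hv, real_inner_smul_left, real_inner_smul_right, hceq, ← hμsq]
          field_simp
        have hvnorm : ‖v‖ = 1 := by
          have h2 : ‖v‖ ^ 2 = 1 := by
            rw [← real_inner_self_eq_norm_sq, hvinner]
          nlinarith [norm_nonneg v]
        have huTu : (inner ℝ u (T u) : ℝ) = 0 := by
          have h1 := hTskew u u
          have h2 : (inner ℝ (T u) u : ℝ) = inner ℝ u (T u) := real_inner_comm _ _
          linarith
        have huv : (inner ℝ u v : ℝ) = 0 := by
          rw [hv, real_inner_smul_right, huTu, mul_zero]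
        have hTv : T v = -(μ • u) := by
          have hS0 : S u = (c i0 : ℝ) • u := hS.apply_eigenvectorBasis hW i0
          have hTTu : T (T u) = -((c i0 : ℝ) • u) := by
            rw [← hS0, hSapp, neg_neg]
          rw [hv, map_smul, hTTu, smul_neg, smul_smul]
          congr 2
          rw [← hμsq]
          field_simp
        -- the span of u, v and its orthogonal complement in W
        set U : Submodule ℝ V := Submodule.span ℝ {(u : V), (v : V)} with hU
        have huU : (u : V) ∈ U := subset_span (Set.mem_insert _ _)
        have hvU : (v : V) ∈ U := subset_span (Set.mem_insert_of_mem _ rfl)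
        have hUW : U ≤ W := by
          rw [hU, span_le]
          rintro x (rfl | rfl) <;> simp [SetLike.mem_coe, coe_mem]
        have honuv : Orthonormal ℝ ![(u : V), (v : V)] := by
          rw [orthonormal_iff_ite]
          intro i j
          fin_cases i <;> fin_cases j <;>
            simp only [Fin.mk_zero, Fin.mk_one, Fin.isValue, Matrix.cons_val_zero, Matrix.cons_val_one, Matrix.head_cons]
          · rw [if_pos (by decide), ← Submodule.coe_inner, real_inner_self_eq_norm_sq, hunorm]
            norm_num
          · rw [if_neg (by decide), ← Submodule.coe_inner]
            exact huv
          · rw [if_neg (by decide), ← Submodule.coe_inner, real_inner_comm]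
            exact huv
          · rw [if_pos (by decide), ← Submodule.coe_inner, real_inner_self_eq_norm_sq, hvnorm]
            norm_num
        have hUrank : finrank ℝ U = 2 := by
          have hr : U = Submodule.span ℝ (Set.range ![(u : V), (v : V)]) := by
            rw [hU]
            congr 1
            simp only [Matrix.range_cons, Matrix.range_empty, Set.union_empty,
              Set.union_singleton]
            exact (Set.pair_comm _ _)
          rw [hr, finrank_span_eq_card honuv.linearIndependent]
          simp
        set W' : Submodule ℝ V := Uᗮ ⊓ W with hW'
        have hleW : W' ≤ W := inf_le_right
        haveI : FiniteDimensional ℝ W' := Submodule.finiteDimensional_of_le hleW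
        have hW'rank : finrank ℝ W' = 2 * m :=
          Submodule.finrank_add_inf_finrank_orthogonal' (K₁ := U) (K₂ := W)
            hUW (n := 2 * m) (by rw [hUrank, hW]; ring)
        obtain ⟨b', hb'⟩ := ih W' hW'rank
        -- assemble the new orthonormal family
        set e : Fin (2 * (m + 1)) → W := fun i =>
          if h0 : (i : ℕ) = 0 then u
          else if h1 : (i : ℕ) = 1 then v
          else Submodule.inclusion hleW (b' ⟨(i : ℕ) - 2, by have := i.isLt; omega⟩)
          with he
        have he0 : ∀ i : Fin (2 * (m + 1)), (i : ℕ) = 0 → e i = u := by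
          intro i h
          simp only [he]
          rw [dif_pos h]
        have he1 : ∀ i : Fin (2 * (m + 1)), (i : ℕ) = 1 → e i = v := by
          intro i h
          simp only [he]
          rw [dif_neg (by omega), dif_pos h]
        have hecoe : ∀ (i : Fin (2 * (m + 1))) (h0 : (i : ℕ) ≠ 0) (h1 : (i : ℕ) ≠ 1),
            (e i : V) = ((b' ⟨(i : ℕ) - 2, by have := i.isLt; omega⟩ : W') : V) := by
          intro i h0 h1
          simp only [he]
          rw [dif_neg h0, dif_neg h1]
          rfl
        have hb'U : ∀ k : Fin (2 * m), ((b' k : W') : V) ∈ Uᗮ := fun k =>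
          ((Submodule.mem_inf).mp (b' k).2).1
        have heon : Orthonormal ℝ e := by
          rw [orthonormal_iff_ite]
          intro i j
          rcases Nat.lt_or_ge (i : ℕ) 2 with hi2 | hi2 <;>
            rcases Nat.lt_or_ge (j : ℕ) 2 with hj2 | hj2
          · -- both < 2
            have hi : (i : ℕ) = 0 ∨ (i : ℕ) = 1 := by omega
            have hj : (j : ℕ) = 0 ∨ (j : ℕ) = 1 := by omega
            rcases hi with hi | hi <;> rcases hj with hj | hj
            · rw [he0 i hi, he0 j hj, if_pos (Fin.ext (by omega)),
                real_inner_self_eq_norm_sq, hunorm]; norm_num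
            · rw [he0 i hi, he1 j hj, if_neg (fun h => by
                have := congrArg Fin.val h; omega)]
              exact huv
            · rw [he1 i hi, he0 j hj, if_neg (fun h => by
                have := congrArg Fin.val h; omega), real_inner_comm]
              exact huv
            · rw [he1 i hi, he1 j hj, if_pos (Fin.ext (by omega)),
                real_inner_self_eq_norm_sq, hvnorm]; norm_num
          · -- i < 2 ≤ j
            rw [if_neg (fun h => by have := congrArg Fin.val h; omega)]
            rw [Submodule.coe_inner, hecoe j (by omega) (by omega)]
            have hmem := hb'U ⟨(j : ℕ) - 2, by have := j.isLt; omega⟩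
            have hi : (i : ℕ) = 0 ∨ (i : ℕ) = 1 := by omega
            rcases hi with hi | hi
            · rw [he0 i hi]
              exact Submodule.inner_right_of_mem_orthogonal huU hmem
            · rw [he1 i hi]
              exact Submodule.inner_right_of_mem_orthogonal hvU hmem
          · -- j < 2 ≤ i
            rw [if_neg (fun h => by have := congrArg Fin.val h; omega)]
            rw [Submodule.coe_inner, hecoe i (by omega) (by omega)]
            have hmem := hb'U ⟨(i : ℕ) - 2, by have := i.isLt; omega⟩
            have hj : (j : ℕ) = 0 ∨ (j : ℕ) = 1 := by omega
            rcases hj with hj | hj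
            · rw [he0 j hj]
              exact Submodule.inner_left_of_mem_orthogonal huU hmem
            · rw [he1 j hj]
              exact Submodule.inner_left_of_mem_orthogonal hvU hmem
          · -- both ≥ 2
            rw [Submodule.coe_inner, hecoe i (by omega) (by omega),
              hecoe j (by omega) (by omega), ← Submodule.coe_inner]
            rw [(orthonormal_iff_ite.mp b'.orthonormal)
              ⟨(i : ℕ) - 2, by have := i.isLt; omega⟩ ⟨(j : ℕ) - 2, by have := j.isLt; omega⟩]
            congr 1
            simp only [Fin.mk.injEq, Fin.ext_iff, eq_iff_iff]
            omega
        have hcard : Fintype.card (Fin (2 * (m + 1))) = finrank ℝ W := by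
          simp [hW]
        let bB : Basis (Fin (2 * (m + 1))) ℝ W :=
          basisOfOrthonormalOfCardEqFinrank heon hcard
        have hbBcoe : ⇑bB = e := coe_basisOfOrthonormalOfCardEqFinrank heon hcard
        let b : OrthonormalBasis (Fin (2 * (m + 1))) ℝ W :=
          bB.toOrthonormalBasis (by rwa [hbBcoe])
        have hbcoe : ∀ i, b i = e i := by
          intro i
          rw [show b i = bB i from congrFun (Basis.coe_toOrthonormalBasis _ _) i, hbBcoe]
        refine ⟨b, fun i j hij hnp => ?_⟩
        rw [hbcoe, hbcoe, ← hT]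
        have hij' : (i : ℕ) < (j : ℕ) := hij
        rcases Nat.lt_or_ge (i : ℕ) 2 with hi2 | hi2
        · rcases Nat.lt_or_ge (j : ℕ) 2 with hj2 | hj2
          · -- i = 0, j = 1 : excluded pair
            exfalso
            exact hnp ⟨⟨0, by omega⟩, by show (i : ℕ) = 2 * 0; omega,
              by show (j : ℕ) = 2 * 0 + 1; omega⟩
          · -- i ∈ {0,1}, j ≥ 2
            have hjc := hecoe j (by omega) (by omega)
            have hmem := hb'U ⟨(j : ℕ) - 2, by have := j.isLt; omega⟩
            have hi : (i : ℕ) = 0 ∨ (i : ℕ) = 1 := by omega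
            rcases hi with hi | hi
            · rw [he0 i hi, hTu, real_inner_smul_left, Submodule.coe_inner, hjc,
                Submodule.inner_right_of_mem_orthogonal hvU hmem, mul_zero]
            · rw [he1 i hi, hTv, inner_neg_left, real_inner_smul_left,
                Submodule.coe_inner, hjc,
                Submodule.inner_right_of_mem_orthogonal huU hmem, mul_zero, neg_zero]
        · -- both ≥ 2
          rw [hT, hecoe i (by omega) (by omega), hecoe j (by omega) (by omega)]
          apply hb'
          · exact (by omega : ((i : ℕ) - 2) < ((j : ℕ) - 2))
          · rintro ⟨k, hk1, hk2⟩
            apply hnp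
            have hk1' : (i : ℕ) - 2 = 2 * (k : ℕ) := hk1
            have hk2' : (j : ℕ) - 2 = 2 * (k : ℕ) + 1 := hk2
            refine ⟨⟨(k : ℕ) + 1, by have := k.isLt; omega⟩, ?_, ?_⟩
            · show (i : ℕ) = 2 * ((k : ℕ) + 1); omega
            · show (j : ℕ) = 2 * ((k : ℕ) + 1) + 1; omega

/-- Let `V` be a real inner product space and `J : V → V` a linear map
with `J² = -id` and `⟨Ju, Jv⟩ = ⟨u, v⟩`; set `ω (u, v) = ⟨Ju, v⟩`.  If `W ⊆ V` is a
finite-dimensional subspace of dimension `2m`, then there are an orthonormal basis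
`e₀, …, e_{2m-1}` of `W` and reals `λ₁, …, λ_m` with `|λ_k| ≤ 1`, such that
`ω (e_{2k}, e_{2k+1}) = λ_k` for each `k` (0-indexed pairs), and `ω (e_i, e_j) = 0` for
every other pair `i < j`. -/
theorem exists_orthonormalBasis_omega_normal_form
    {V : Type*} [NormedAddCommGroup V] [InnerProductSpace ℝ V]
    (J : V →ₗ[ℝ] V)
    (hJ2 : ∀ v : V, J (J v) = -v)
    (hJc : ∀ u v : V, (inner ℝ (J u) (J v) : ℝ) = inner ℝ u v)
    (ω : V → V → ℝ)
    (hω : ∀ u v : V, ω u v = inner ℝ (J u) v)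
    (m : ℕ) (W : Submodule ℝ V) [FiniteDimensional ℝ W]
    (hW : Module.finrank ℝ W = 2 * m) :
    ∃ (b : OrthonormalBasis (Fin (2 * m)) ℝ W) (lam : Fin m → ℝ),
      (∀ k : Fin m, |lam k| ≤ 1) ∧
      (∀ k : Fin m,
        ω (b ⟨2 * (k : ℕ), by have := k.isLt; omega⟩ : W)
          (b ⟨2 * (k : ℕ) + 1, by have := k.isLt; omega⟩ : W) = lam k) ∧
      (∀ i j : Fin (2 * m), i < j →
        (¬ ∃ k : Fin m, (i : ℕ) = 2 * (k : ℕ) ∧ (j : ℕ) = 2 * (k : ℕ) + 1) →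
        ω (b i : W) (b j : W) = 0) := by
  obtain ⟨b, hb⟩ := aux_normal_form J hJ2 hJc m W hW
  have hJnorm : ∀ x : V, ‖J x‖ = ‖x‖ := by
    intro x
    have h := hJc x x
    rw [real_inner_self_eq_norm_sq, real_inner_self_eq_norm_sq] at h
    nlinarith [norm_nonneg (J x), norm_nonneg x]
  have hbnorm : ∀ i, ‖((b i : W) : V)‖ = 1 := by
    intro i
    rw [Submodule.norm_coe]
    exact b.orthonormal.1 i
  refine ⟨b, fun k => ω (b ⟨2 * (k : ℕ), by have := k.isLt; omega⟩ : W)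
      (b ⟨2 * (k : ℕ) + 1, by have := k.isLt; omega⟩ : W), fun k => ?_, fun k => rfl,
      fun i j hij hnp => ?_⟩
  · beta_reduce
    rw [hω]
    calc |(inner ℝ (J ((b ⟨2 * (k : ℕ), by have := k.isLt; omega⟩ : W) : V))
          ((b ⟨2 * (k : ℕ) + 1, by have := k.isLt; omega⟩ : W) : V) : ℝ)|
        ≤ ‖J ((b ⟨2 * (k : ℕ), by have := k.isLt; omega⟩ : W) : V)‖ *
          ‖((b ⟨2 * (k : ℕ) + 1, by have := k.isLt; omega⟩ : W) : V)‖ :=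
          abs_real_inner_le_norm _ _
      _ ≤ 1 := by rw [hJnorm, hbnorm, hbnorm, mul_one]
  · rw [hω]
    exact hb i j hij hnp
end

section
/- Let V be a real inner product space, J : V → V a linear map with J² = −id and ⟨Ju, Jv⟩ = ⟨u, v⟩ for all u, v, and ω(u, v) = ⟨Ju, v⟩. Let W ⊆ V be a 2m-dimensional subspace and let e₁, …, e_{2m} be an orthonormal basis of W such that ω(e_{2k−1}, e_{2k}) = λ_k for k = 1, …, m and ω(e_i, e_j) = 0 for all other pairs i < j. Then the m-fold exterior power ω^m of the restriction of ω to W, evaluated on (e₁, …, e_{2m}), equals m! · λ₁ ⋯ λ_m. -/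
/-- The `m`-fold wedge power `ω^m = ω ∧ ⋯ ∧ ω` of a 2-form `ω`, evaluated on a tuple of
`2m` vectors, given by the usual alternating sum over permutations:
`(ω^m)(v₁, …, v_{2m}) = (1/2^m) ∑_{σ ∈ S_{2m}} sign σ · ∏_{k=1}^m ω(v_{σ(2k-1)}, v_{σ(2k)})`. -/
noncomputable def omegaPow {V : Type*} (m : ℕ) (ω : V → V → ℝ)
    (v : Fin (2 * m) → V) : ℝ :=
  (∑ σ : Equiv.Perm (Fin (2 * m)), ((Equiv.Perm.sign σ : ℤ) : ℝ) *
    ∏ k : Fin m,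
      ω (v (σ ⟨2 * (k : ℕ), by have := k.isLt; omega⟩))
        (v (σ ⟨2 * (k : ℕ) + 1, by have := k.isLt; omega⟩))) / 2 ^ m

namespace OmegaPowAux

open Equiv Finset

variable {m : ℕ}

variable {m : ℕ}

def i0 (k : Fin m) : Fin (2 * m) := ⟨2 * (k : ℕ), by have := k.isLt; omega⟩
def i1 (k : Fin m) : Fin (2 * m) := ⟨2 * (k : ℕ) + 1, by have := k.isLt; omega⟩

def pe (m : ℕ) : Fin m × Bool ≃ Fin (2 * m) where
  toFun p := ⟨2 * (p.1 : ℕ) + (if p.2 then 1 else 0), by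
    have := p.1.isLt; cases p.2 <;> simp <;> omega⟩
  invFun i := (⟨(i : ℕ) / 2, by have := i.isLt; omega⟩, decide ((i : ℕ) % 2 = 1))
  left_inv := by
    rintro ⟨⟨a, ha⟩, b⟩
    cases b <;> simp [Prod.ext_iff, Fin.ext_iff] <;> omega
  right_inv := by
    rintro ⟨i, hi⟩
    simp only [Fin.ext_iff]
    rcases Nat.mod_two_eq_zero_or_one i with h | h <;> simp [h] <;> omega

def flip2 (c : Bool) : Equiv.Perm Bool := if c then Equiv.swap false true else Equiv.refl Bool

def E (p : Equiv.Perm (Fin m) × (Fin m → Bool)) : Equiv.Perm (Fin (2 * m)) :=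
  (pe m).permCongr (Equiv.prodShear p.1 (fun k => flip2 (p.2 k)))

lemma pe_symm_i0 (k : Fin m) : (pe m).symm (i0 k) = (k, false) := by
  simp [pe, i0, Prod.ext_iff, Fin.ext_iff]

lemma pe_symm_i1 (k : Fin m) : (pe m).symm (i1 k) = (k, true) := by
  simp [pe, i1, Prod.ext_iff, Fin.ext_iff]
  omega

lemma E_i0 (p : Equiv.Perm (Fin m) × (Fin m → Bool)) (k : Fin m) :
    E p (i0 k) = if p.2 k then i1 (p.1 k) else i0 (p.1 k) := by
  have h : E p (i0 k) = pe m (Equiv.prodShear p.1 (fun k => flip2 (p.2 k)) ((pe m).symm (i0 k))) := rfl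
  rw [h, pe_symm_i0]
  cases hc : p.2 k <;> simp [flip2, hc, pe, i0, i1, Fin.ext_iff]

lemma E_i1 (p : Equiv.Perm (Fin m) × (Fin m → Bool)) (k : Fin m) :
    E p (i1 k) = if p.2 k then i0 (p.1 k) else i1 (p.1 k) := by
  have h : E p (i1 k) = pe m (Equiv.prodShear p.1 (fun k => flip2 (p.2 k)) ((pe m).symm (i1 k))) := rfl
  rw [h, pe_symm_i1]
  cases hc : p.2 k <;> simp [flip2, hc, pe, i0, i1, Fin.ext_iff]

lemma shear_decomp (π : Equiv.Perm (Fin m)) (f : Fin m → Equiv.Perm Bool) :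
    (Equiv.prodShear π f : Equiv.Perm (Fin m × Bool)) =
      (Equiv.prodCongrLeft (fun _ : Bool => π)) * (Equiv.prodCongrRight f) :=
  Equiv.ext fun x => rfl

lemma sign_E (p : Equiv.Perm (Fin m) × (Fin m → Bool)) :
    Equiv.Perm.sign (E p) = ∏ k : Fin m, (if p.2 k then (-1 : ℤˣ) else 1) := by
  rw [E, Equiv.Perm.sign_permCongr, shear_decomp, map_mul,
    Equiv.Perm.sign_prodCongrLeft, Equiv.Perm.sign_prodCongrRight]
  have h1 : (∏ _b : Bool, Equiv.Perm.sign p.1) = 1 := by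
    rw [Finset.prod_const]
    simp [Int.units_pow_two]
  rw [h1, one_mul]
  refine Finset.prod_congr rfl fun k _ => ?_
  cases h : p.2 k <;> simp [flip2, h, Equiv.Perm.sign_swap]

lemma E_inj : Function.Injective (E (m := m)) := by
  intro p q h
  have h' : (Equiv.prodShear p.1 (fun k => flip2 (p.2 k)) : Equiv.Perm (Fin m × Bool)) =
      Equiv.prodShear q.1 (fun k => flip2 (q.2 k)) := (pe m).permCongr.injective h
  have hap : ∀ k : Fin m, (p.1 k, flip2 (p.2 k) false) = (q.1 k, flip2 (q.2 k) false) := by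
    intro k
    exact Equiv.congr_fun h' (k, false)
  have h1 : p.1 = q.1 := Equiv.ext fun k => congrArg Prod.fst (hap k)
  have h2 : p.2 = q.2 := by
    funext k
    have := congrArg Prod.snd (hap k)
    cases hp : p.2 k <;> cases hq : q.2 k <;> simp [flip2, hp, hq] at this ⊢
  exact Prod.ext h1 h2

lemma exists_preimage (σ : Equiv.Perm (Fin (2 * m)))
    (h : ∀ k : Fin m, ((σ (i1 k)) : ℕ) =
      2 * (((σ (i0 k)) : ℕ) / 2) + (1 - ((σ (i0 k)) : ℕ) % 2)) :
    ∃ p, E p = σ := by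
  set πf : Fin m → Fin m := fun k => ⟨((σ (i0 k)) : ℕ) / 2, by
    have := (σ (i0 k)).isLt; omega⟩ with hπf
  have hinj : Function.Injective πf := by
    intro k k' hkk
    have hv : ((σ (i0 k)) : ℕ) / 2 = ((σ (i0 k')) : ℕ) / 2 := congrArg Fin.val hkk
    by_cases heq : σ (i0 k) = σ (i0 k')
    · have := σ.injective heq
      have : (i0 k : ℕ) = (i0 k' : ℕ) := congrArg Fin.val this
      simp only [i0] at this
      exact Fin.ext (by omega)
    · exfalso
      have hne : ((σ (i0 k)) : ℕ) ≠ ((σ (i0 k')) : ℕ) := fun hc => heq (Fin.ext hc)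
      have hk' := h k'
      have : ((σ (i0 k)) : ℕ) = ((σ (i1 k')) : ℕ) := by omega
      have h2 : σ (i0 k) = σ (i1 k') := Fin.ext this
      have h3 : i0 k = i1 k' := σ.injective h2
      have : (i0 k : ℕ) = (i1 k' : ℕ) := congrArg Fin.val h3
      simp only [i0, i1] at this
      omega
  refine ⟨(Equiv.ofBijective πf ((Finite.injective_iff_bijective).mp hinj),
    fun k => decide (((σ (i0 k)) : ℕ) % 2 = 1)), ?_⟩
  ext i
  have hk : (i : ℕ) / 2 < m := by have := i.isLt; omega
  set k : Fin m := ⟨(i : ℕ) / 2, hk⟩ with hkdef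
  have hofb : ∀ j : Fin m, (Equiv.ofBijective πf ((Finite.injective_iff_bijective).mp hinj)) j = πf j :=
    fun j => rfl
  rcases Nat.mod_two_eq_zero_or_one (i : ℕ) with hpar | hpar
  · have hi : i = i0 k := Fin.ext (by show (i : ℕ) = 2 * ((i : ℕ) / 2); omega)
    rw [hi, E_i0, hofb]
    rcases Nat.mod_two_eq_zero_or_one ((σ (i0 k)) : ℕ) with hp | hp
    · have hd : (decide (((σ (i0 k)) : ℕ) % 2 = 1)) = false := by simp [hp]
      simp only [hd, Bool.false_eq_true, if_false]
      show 2 * (((σ (i0 k)) : ℕ) / 2) = ((σ (i0 k)) : ℕ)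
      omega
    · have hd : (decide (((σ (i0 k)) : ℕ) % 2 = 1)) = true := by simp [hp]
      simp only [hd, if_true]
      show 2 * (((σ (i0 k)) : ℕ) / 2) + 1 = ((σ (i0 k)) : ℕ)
      omega
  · have hi : i = i1 k := Fin.ext (by show (i : ℕ) = 2 * ((i : ℕ) / 2) + 1; omega)
    rw [hi, E_i1, hofb]
    have hkk := h k
    rcases Nat.mod_two_eq_zero_or_one ((σ (i0 k)) : ℕ) with hp | hp
    · have hd : (decide (((σ (i0 k)) : ℕ) % 2 = 1)) = false := by simp [hp]
      simp only [hd, Bool.false_eq_true, if_false]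
      show 2 * (((σ (i0 k)) : ℕ) / 2) + 1 = ((σ (i1 k)) : ℕ)
      omega
    · have hd : (decide (((σ (i0 k)) : ℕ) % 2 = 1)) = true := by simp [hp]
      simp only [hd, if_true]
      show 2 * (((σ (i0 k)) : ℕ) / 2) = ((σ (i1 k)) : ℕ)
      omega

lemma key (lam : Fin m → ℝ) {V : Type*} (v : Fin (2 * m) → V) (ω : V → V → ℝ)
    (h0 : ∀ i j : Fin (2 * m),
      (j : ℕ) ≠ 2 * ((i : ℕ) / 2) + (1 - (i : ℕ) % 2) → ω (v i) (v j) = 0)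
    (h1 : ∀ k : Fin m, ω (v (i0 k)) (v (i1 k)) = lam k)
    (h2 : ∀ k : Fin m, ω (v (i1 k)) (v (i0 k)) = -lam k) :
    ∑ σ : Equiv.Perm (Fin (2 * m)), ((Equiv.Perm.sign σ : ℤ) : ℝ) *
      ∏ k : Fin m, ω (v (σ (i0 k))) (v (σ (i1 k)))
      = (m.factorial : ℝ) * 2 ^ m * ∏ k : Fin m, lam k := by
  classical
  set T : Equiv.Perm (Fin (2 * m)) → ℝ := fun σ =>
    ((Equiv.Perm.sign σ : ℤ) : ℝ) * ∏ k : Fin m, ω (v (σ (i0 k))) (v (σ (i1 k))) with hT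
  have hsupp : ∀ σ ∈ Finset.univ, σ ∉ Finset.image E Finset.univ → T σ = 0 := by
    intro σ _ hσ
    by_contra hne
    apply hσ
    have hprod : ∏ k : Fin m, ω (v (σ (i0 k))) (v (σ (i1 k))) ≠ 0 := by
      intro hc; apply hne; rw [hT]; simp [hc]
    have hfac : ∀ k : Fin m, ω (v (σ (i0 k))) (v (σ (i1 k))) ≠ 0 :=
      fun k => Finset.prod_ne_zero_iff.mp hprod k (Finset.mem_univ k)
    have hpart : ∀ k : Fin m, ((σ (i1 k)) : ℕ) =
        2 * (((σ (i0 k)) : ℕ) / 2) + (1 - ((σ (i0 k)) : ℕ) % 2) := by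
      intro k
      by_contra hc
      exact hfac k (h0 _ _ hc)
    obtain ⟨p, hp⟩ := exists_preimage σ hpart
    exact Finset.mem_image.mpr ⟨p, Finset.mem_univ p, hp⟩
  have hval : ∀ p : Equiv.Perm (Fin m) × (Fin m → Bool), T (E p) = ∏ k : Fin m, lam k := by
    intro p
    have hfac : ∀ k : Fin m, ω (v (E p (i0 k))) (v (E p (i1 k))) =
        (if p.2 k then (-1 : ℝ) else 1) * lam (p.1 k) := by
      intro k
      rw [E_i0, E_i1]
      by_cases hc : p.2 k <;> simp [hc, h1, h2]
    have hsign : ((Equiv.Perm.sign (E p) : ℤ) : ℝ) =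
        ∏ k : Fin m, (if p.2 k then (-1 : ℝ) else 1) := by
      rw [sign_E]
      push_cast
      refine Finset.prod_congr rfl fun k _ => ?_
      by_cases hc : p.2 k <;> simp [hc]
    rw [hT]
    simp only [hfac, hsign, Finset.prod_mul_distrib]
    rw [← mul_assoc, ← Finset.prod_mul_distrib]
    have hone : ∀ k : Fin m, (if p.2 k then (-1 : ℝ) else 1) * (if p.2 k then (-1 : ℝ) else 1) = 1 := by
      intro k; by_cases hc : p.2 k <;> simp [hc]
    rw [Finset.prod_congr rfl fun k _ => hone k, Finset.prod_const_one, one_mul]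
    exact Equiv.prod_comp p.1 lam
  calc ∑ σ : Equiv.Perm (Fin (2 * m)), T σ
      = ∑ σ ∈ Finset.image E Finset.univ, T σ :=
        (Finset.sum_subset (Finset.subset_univ _) hsupp).symm
    _ = ∑ p : Equiv.Perm (Fin m) × (Fin m → Bool), T (E p) :=
        Finset.sum_image fun p _ q _ h => E_inj h
    _ = ∑ _p : Equiv.Perm (Fin m) × (Fin m → Bool), ∏ k : Fin m, lam k :=
        Finset.sum_congr rfl fun p _ => hval p
    _ = (m.factorial : ℝ) * 2 ^ m * ∏ k : Fin m, lam k := by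
        rw [Finset.sum_const, Finset.card_univ, Fintype.card_prod, Fintype.card_perm,
          Fintype.card_fun, Fintype.card_fin, Fintype.card_bool, nsmul_eq_mul]
        push_cast
        ring


lemma key' (lam : Fin m → ℝ) {V : Type*} (v : Fin (2 * m) → V) (ω : V → V → ℝ)
    (h0 : ∀ i j : Fin (2 * m),
      (j : ℕ) ≠ 2 * ((i : ℕ) / 2) + (1 - (i : ℕ) % 2) → ω (v i) (v j) = 0)
    (h1 : ∀ k : Fin m, ω (v (i0 k)) (v (i1 k)) = lam k)
    (h2 : ∀ k : Fin m, ω (v (i1 k)) (v (i0 k)) = -lam k) :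
    omegaPow m ω v = (m.factorial : ℝ) * ∏ k : Fin m, lam k := by
  have hmain := key lam v ω h0 h1 h2
  have h2m : (2 : ℝ) ^ m ≠ 0 := by positivity
  calc omegaPow m ω v
      = (∑ σ : Equiv.Perm (Fin (2 * m)), ((Equiv.Perm.sign σ : ℤ) : ℝ) *
          ∏ k : Fin m, ω (v (σ (i0 k))) (v (σ (i1 k)))) / 2 ^ m := rfl
    _ = ((m.factorial : ℝ) * 2 ^ m * ∏ k : Fin m, lam k) / 2 ^ m := by rw [hmain]
    _ = (m.factorial : ℝ) * ∏ k : Fin m, lam k := by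
        field_simp

end OmegaPowAux

/-- Let `V` be a real inner product space and `J` a compatible almost
complex structure, `ω (u, v) = ⟨Ju, v⟩`.  Let `W ⊆ V` be a `2m`-dimensional subspace with
an orthonormal basis `e₀, …, e_{2m-1}` such that `ω (e_{2k}, e_{2k+1}) = λ_k` and
`ω (e_i, e_j) = 0` for all other pairs `i < j`.  Then
`ω^m (e₀, …, e_{2m-1}) = m! · λ₁ ⋯ λ_m`. -/
theorem omegaPow_eq_factorial_mul_prod
    {V : Type*} [NormedAddCommGroup V] [InnerProductSpace ℝ V]
    (J : V →ₗ[ℝ] V)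
    (hJ2 : ∀ v : V, J (J v) = -v)
    (hJc : ∀ u v : V, (inner ℝ (J u) (J v) : ℝ) = inner ℝ u v)
    (ω : V → V → ℝ)
    (hω : ∀ u v : V, ω u v = inner ℝ (J u) v)
    (m : ℕ) (W : Submodule ℝ V)
    (b : OrthonormalBasis (Fin (2 * m)) ℝ W)
    (lam : Fin m → ℝ)
    (hdiag : ∀ k : Fin m,
      ω (b ⟨2 * (k : ℕ), by have := k.isLt; omega⟩ : W)
        (b ⟨2 * (k : ℕ) + 1, by have := k.isLt; omega⟩ : W) = lam k)
    (hoff : ∀ i j : Fin (2 * m), i < j →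
      (¬ ∃ k : Fin m, (i : ℕ) = 2 * (k : ℕ) ∧ (j : ℕ) = 2 * (k : ℕ) + 1) →
      ω (b i : W) (b j : W) = 0) :
    omegaPow m ω (fun i => (b i : W)) = (m.factorial : ℝ) * ∏ k : Fin m, lam k := by
  have hanti : ∀ u v : V, ω u v = - ω v u := by
    intro u v
    rw [hω, hω]
    have h1 : (inner ℝ (J u) v : ℝ) = inner ℝ (J (J u)) (J v) := (hJc _ _).symm
    rw [h1, hJ2, inner_neg_left, real_inner_comm]
  have h0 : ∀ i j : Fin (2 * m),
      (j : ℕ) ≠ 2 * ((i : ℕ) / 2) + (1 - (i : ℕ) % 2) →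
      ω ((b i : W) : V) ((b j : W) : V) = 0 := by
    intro i j hne
    rcases lt_trichotomy i j with hij | hij | hij
    · apply hoff i j hij
      rintro ⟨k, hk1, hk2⟩
      apply hne
      omega
    · subst hij
      have h := hanti ((b i : W) : V) ((b i : W) : V)
      linarith
    · rw [hanti]
      rw [hoff j i hij]
      · ring
      · rintro ⟨k, hk1, hk2⟩
        apply hne
        omega
  have h1 : ∀ k : Fin m,
      ω ((b (OmegaPowAux.i0 k) : W) : V) ((b (OmegaPowAux.i1 k) : W) : V) = lam k :=
    fun k => hdiag k
  have h2 : ∀ k : Fin m,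
      ω ((b (OmegaPowAux.i1 k) : W) : V) ((b (OmegaPowAux.i0 k) : W) : V) = -lam k := by
    intro k
    rw [hanti]
    exact congrArg Neg.neg (hdiag k)
  exact OmegaPowAux.key' lam (fun i => ((b i : W) : V)) ω h0 h1 h2
end
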